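/- Let α > 0, β > 0, 0 < k < 1, C > 0, τ > 0, κ > 0, and let B be an integer with B ≥ 1. Let w* be the unique positive solution of α·w^(k−1)·(1 − (1+2^B)(w/(Cτ))^B) = β·w·(1+2^B)(w/(Cτ))^B, and set p* = (w*/(Cτ))^B. Assume B > (2 − k)(1 − (1+2^B)p*). Define M = (2 − k)(1 − (1+2^B)p*)·α·(w*)^(k−1)/τ and N = B·α·(w*)^(k−1)/τ. Then every complex root λ of λ + κM + κN·exp(−λτ) = 0 has negative real part if and only if κ·α·(w*)^(k−1)·√(B² − (k−2)²(1 − (1+2^B)p*)²) < arccos((k−2)(1 − (1+2^B)p*)/B). -/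

import Mathlib

open Real Complex


lemma root_iff (a b τ : ℝ) (z : ℂ) :
    z + (a : ℂ) + (b : ℂ) * Complex.exp (-z * (τ : ℂ)) = 0 ↔
      (z.re + a + b * Real.exp (-(z.re * τ)) * Real.cos (z.im * τ) = 0 ∧
       z.im - b * Real.exp (-(z.re * τ)) * Real.sin (z.im * τ) = 0) := by
  rw [Complex.ext_iff]
  simp [Complex.exp_re, Complex.exp_im, Complex.add_re, Complex.add_im,
    Complex.mul_re, Complex.mul_im, Real.cos_neg, Real.sin_neg]
  constructor <;> rintro ⟨h1, h2⟩ <;> constructor <;> nlinarith [h1, h2]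

noncomputable def Xf (b τ θ : ℝ) : ℝ := Real.log (τ * b * Real.sin θ / θ) / τ

noncomputable def Gf (a b τ θ : ℝ) : ℝ :=
  Xf b τ θ + a + (θ/τ) * (Real.cos θ / Real.sin θ)

set_option maxHeartbeats 2000000 in
lemma exists_root (a b τ : ℝ) (ha : 0 < a) (hab : a < b) (hτ : 0 < τ)
    (h : Real.arccos (-(a/b)) ≤ τ * Real.sqrt (b^2 - a^2)) :
    ∃ z : ℂ, z + (a : ℂ) + (b : ℂ) * Complex.exp (-z * (τ : ℂ)) = 0 ∧ 0 ≤ z.re := by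
  have hb : 0 < b := ha.trans hab
  set θ0 := Real.arccos (-(a/b)) with hθ0
  set ω := Real.sqrt (b^2 - a^2) with hω
  have hba2 : 0 < b^2 - a^2 := by nlinarith
  have hωpos : 0 < ω := Real.sqrt_pos.mpr hba2
  have harg1 : (-1 : ℝ) < -(a/b) := by
    rw [neg_lt_neg_iff, div_lt_one hb]; exact hab
  have harg2 : -(a/b) < 0 := by
    have : 0 < a/b := div_pos ha hb
    linarith
  have hcos0 : Real.cos θ0 = -(a/b) := Real.cos_arccos harg1.le (by linarith)
  have hsin0 : Real.sin θ0 = ω / b := by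
    rw [hθ0, Real.sin_arccos]
    rw [show 1 - (-(a/b))^2 = (b^2 - a^2) / b^2 by field_simp]
    rw [Real.sqrt_div hba2.le, Real.sqrt_sq hb.le]
  have hθ0pi : θ0 < π := by
    refine lt_of_le_of_ne (hθ0 ▸ Real.arccos_le_pi _) ?_
    rw [hθ0, Ne, Real.arccos_eq_pi]
    intro hcon; linarith
  have hθ0half : π / 2 < θ0 := by
    by_contra hcon
    push_neg at hcon
    have h1 : Real.cos (π/2) ≤ Real.cos θ0 := by
      apply Real.cos_le_cos_of_nonneg_of_le_pi (hθ0 ▸ Real.arccos_nonneg _)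
        (by linarith [Real.pi_div_two_pos]) hcon
    rw [Real.cos_pi_div_two, hcos0] at h1
    nlinarith
  have hθ0pos : 0 < θ0 := by linarith [Real.pi_div_two_pos]
  clear_value θ0 ω
  rcases eq_or_lt_of_le h with heq | hlt
  · -- pure imaginary root
    refine ⟨⟨0, ω⟩, ?_, le_refl 0⟩
    rw [root_iff]
    constructor
    · show (0:ℝ) + a + b * Real.exp (-(0*τ)) * Real.cos (ω*τ) = 0
      rw [show ω * τ = θ0 by rw [heq]; ring, show (-(0*τ):ℝ) = 0 by ring,
        Real.exp_zero, hcos0]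
      field_simp
      ring
    · show ω - b * Real.exp (-(0*τ)) * Real.sin (ω*τ) = 0
      rw [show ω * τ = θ0 by rw [heq]; ring, show (-(0*τ):ℝ) = 0 by ring,
        Real.exp_zero, hsin0]
      field_simp
      ring
  · -- strict case: construct a root with positive real part
    set X : ℝ → ℝ := Xf b τ with hXdef
    set G : ℝ → ℝ := Gf a b τ with hGdef
    clear_value X G
    have hXeq : ∀ θ, X θ = Real.log (τ * b * Real.sin θ / θ) / τ := fun θ => by
      rw [hXdef]; rfl
    have hGeq : ∀ θ, G θ = X θ + a + (θ/τ) * (Real.cos θ / Real.sin θ) := fun θ => by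
      rw [hGdef, hXdef]; rfl
    have hεpos : 0 < θ0 * Real.exp (-(a*τ)) / (2*τ*b) := by positivity
    obtain ⟨θ', hθ'gt, hθ'lt, hsθ'ε, hsθ'pos⟩ :
        ∃ θ', θ0 < θ' ∧ θ' < π ∧
          Real.sin θ' < θ0 * Real.exp (-(a*τ)) / (2*τ*b) ∧ 0 < Real.sin θ' := by
      set ε : ℝ := θ0 * Real.exp (-(a*τ)) / (2*τ*b) with hεdef
      set δ : ℝ := min ε ((π - θ0)/2) with hδdef
      have hδpos : 0 < δ := lt_min hεpos (by linarith)
      have hδle : δ ≤ (π - θ0)/2 := min_le_right _ _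
      refine ⟨π - δ, by linarith, by linarith, ?_, ?_⟩
      · rw [Real.sin_pi_sub]
        calc Real.sin δ < δ := Real.sin_lt hδpos
        _ ≤ ε := min_le_left _ _
      · exact Real.sin_pos_of_pos_of_lt_pi (by linarith) (by linarith)
    have hθ'pos : (0:ℝ) < θ' := by linarith
    have hIfacts : ∀ θ ∈ Set.Icc θ0 θ', 0 < θ ∧ 0 < Real.sin θ := by
      rintro θ ⟨l, r⟩
      exact ⟨by linarith, Real.sin_pos_of_pos_of_lt_pi (by linarith) (by linarith)⟩
    have hXcont : ContinuousOn X (Set.Icc θ0 θ') := by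
      rw [show X = fun θ => Real.log (τ * b * Real.sin θ / θ) / τ from funext hXeq]
      apply ContinuousOn.div_const
      apply ContinuousOn.log
      · exact ((continuous_const.mul Real.continuous_sin).continuousOn).div
          continuousOn_id (fun θ hθ => (hIfacts θ hθ).1.ne')
      · intro θ hθ
        have h1 := (hIfacts θ hθ).1
        have h2 := (hIfacts θ hθ).2
        positivity
    have hGcont : ContinuousOn G (Set.Icc θ0 θ') := by
      rw [show G = fun θ => X θ + a + (θ/τ) * (Real.cos θ / Real.sin θ) from funext hGeq]
      apply (hXcont.add continuousOn_const).add
      exact (continuousOn_id.div_const τ).mul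
        (Real.continuous_cos.continuousOn.div Real.continuous_sin.continuousOn
          (fun θ hθ => (hIfacts θ hθ).2.ne'))
    have harg0 : τ * b * Real.sin θ0 = τ * ω := by
      rw [hsin0]; field_simp
    have hXθ0 : 0 < X θ0 := by
      rw [hXeq]
      have h1 : (1:ℝ) < τ * ω / θ0 := (one_lt_div hθ0pos).mpr hlt
      rw [harg0]
      exact div_pos (Real.log_pos h1) hτ
    have hGθ0 : 0 < G θ0 := by
      rw [hGeq]
      have hcot : Real.cos θ0 / Real.sin θ0 = -(a/ω) := by
        rw [hcos0, hsin0]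
        field_simp
      rw [hcot]
      have key : (θ0/τ) * (a/ω) < a := by
        rw [div_mul_div_comm, div_lt_iff₀ (by positivity)]
        nlinarith
      linarith
    have hXθ' : X θ' < -a := by
      rw [hXeq]
      rw [div_lt_iff₀ hτ]
      have hpos : 0 < τ * b * Real.sin θ' / θ' := div_pos (by positivity) hθ'pos
      rw [Real.log_lt_iff_lt_exp hpos]
      have h1 : τ * b * Real.sin θ' / θ' ≤ τ * b * Real.sin θ' / θ0 :=
        div_le_div_of_nonneg_left (by positivity) hθ0pos hθ'gt.le
      have h2 : τ * b * Real.sin θ' < τ * b * (θ0 * Real.exp (-(a*τ)) / (2*τ*b)) :=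
        mul_lt_mul_of_pos_left hsθ'ε (by positivity)
      have h3 : τ * b * (θ0 * Real.exp (-(a*τ)) / (2*τ*b)) = θ0 * Real.exp (-(a*τ)) / 2 := by
        field_simp
      have h4 : τ * b * Real.sin θ' / θ0 < Real.exp (-(a*τ)) / 2 := by
        rw [div_lt_div_iff₀ hθ0pos (by norm_num : (0:ℝ) < 2)]
        nlinarith [Real.exp_pos (-(a*τ))]
      calc τ * b * Real.sin θ' / θ' ≤ τ * b * Real.sin θ' / θ0 := h1
      _ < Real.exp (-(a*τ)) / 2 := h4
      _ < Real.exp (-(a*τ)) := by linarith [Real.exp_pos (-(a*τ))]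
      _ = Real.exp (-a*τ) := by ring_nf
    have hcosθ' : Real.cos θ' < 0 :=
      Real.cos_neg_of_pi_div_two_lt_of_lt (by linarith) (by linarith [Real.pi_pos])
    have hGθ' : G θ' < 0 := by
      rw [hGeq]
      have h1 : (θ'/τ) * (Real.cos θ' / Real.sin θ') ≤ 0 :=
        mul_nonpos_of_nonneg_of_nonpos (div_nonneg hθ'pos.le hτ.le)
          (div_nonpos_of_nonpos_of_nonneg hcosθ'.le hsθ'pos.le)
      linarith
    have hFcont : ContinuousOn (fun θ => min (G θ) (X θ)) (Set.Icc θ0 θ') :=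
      hGcont.inf hXcont
    have h0mem : (0:ℝ) ∈ Set.Icc (min (G θ') (X θ')) (min (G θ0) (X θ0)) := by
      constructor
      · exact le_of_lt (lt_of_le_of_lt (min_le_left _ _) hGθ')
      · exact le_of_lt (lt_min hGθ0 hXθ0)
    obtain ⟨θs, hθsI, hFθs⟩ := intermediate_value_Icc' hθ'gt.le hFcont h0mem
    simp only at hFθs
    have hGs : 0 ≤ G θs := hFθs ▸ min_le_left _ _
    have hXs : 0 ≤ X θs := hFθs ▸ min_le_right _ _
    have hθspos := (hIfacts θs hθsI).1
    have hsinspos := (hIfacts θs hθsI).2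
    have hrpos : 0 < τ * b * Real.sin θs / θs := div_pos (by positivity) hθspos
    rcases eq_or_lt_of_le hXs with hX0 | hXpos
    · -- X θs = 0: contradiction with G θs ≥ 0
      exfalso
      have hlog0 : Real.log (τ * b * Real.sin θs / θs) = 0 := by
        rw [hXeq] at hX0
        field_simp at hX0
        linarith
      have hr1 : τ * b * Real.sin θs / θs = 1 := by
        have h5 := Real.exp_log hrpos
        rw [hlog0, Real.exp_zero] at h5
        linarith
      have hbs : τ * b * Real.sin θs = θs := by
        rw [div_eq_one_iff_eq hθspos.ne'] at hr1
        exact hr1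
      have hθsgt : θ0 < θs := by
        rcases lt_or_eq_of_le hθsI.1 with h | h
        · exact h
        · exfalso
          rw [← h] at hX0
          linarith
      have hcoss : Real.cos θs < -(a/b) := by
        rw [← hcos0]
        exact Real.strictAntiOn_cos ⟨hθ0pos.le, hθ0pi.le⟩
          ⟨hθspos.le, by linarith [hθsI.2]⟩ hθsgt
      have hGval : G θs = a + b * Real.cos θs := by
        rw [hGeq, ← hX0]
        have hdiv : θs/τ = b * Real.sin θs := by
          rw [div_eq_iff hτ.ne']; linear_combination -hbs
        rw [hdiv]
        field_simp
        ring
      have h7 : b * Real.cos θs < b * (-(a/b)) := mul_lt_mul_of_pos_left hcoss hb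
      have h8 : b * (-(a/b)) = -a := by field_simp
      linarith
    · -- X θs > 0: G θs = 0, build the root
      have hGs0 : G θs = 0 := by
        by_contra hcon
        have hGpos : 0 < G θs := lt_of_le_of_ne hGs (Ne.symm hcon)
        have h6 := lt_min hGpos hXpos
        rw [hFθs] at h6
        exact lt_irrefl _ h6
      refine ⟨⟨X θs, θs/τ⟩, ?_, hXs⟩
      rw [root_iff]
      have hE : Real.exp (-(X θs * τ)) = θs/(τ*b*Real.sin θs) := by
        have hXτ : X θs * τ = Real.log (τ*b*Real.sin θs/θs) := by
          rw [hXeq]; exact div_mul_cancel₀ _ hτ.ne'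
        rw [hXτ, Real.exp_neg, Real.exp_log hrpos, inv_div]
      have hyτ : θs/τ*τ = θs := div_mul_cancel₀ _ hτ.ne'
      constructor
      · show X θs + a + b * Real.exp (-(X θs * τ)) * Real.cos (θs/τ*τ) = 0
        rw [hyτ, hE]
        have h1 : b * (θs/(τ*b*Real.sin θs)) * Real.cos θs
            = (θs/τ) * (Real.cos θs/Real.sin θs) := by
          field_simp
        rw [h1]
        rw [hGeq] at hGs0
        linarith
      · show θs/τ - b * Real.exp (-(X θs * τ)) * Real.sin (θs/τ*τ) = 0
        rw [hyτ, hE]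
        field_simp
        ring

lemma no_root (a b τ : ℝ) (ha : 0 < a) (hab : a < b) (hτ : 0 < τ)
    (h : τ * Real.sqrt (b^2 - a^2) < Real.arccos (-(a/b)))
    (x y : ℝ) (hx : 0 ≤ x) (hy : 0 ≤ y)
    (h1 : x + a + b * Real.exp (-(x*τ)) * Real.cos (y*τ) = 0)
    (h2 : y - b * Real.exp (-(x*τ)) * Real.sin (y*τ) = 0) : False := by
  have hb : 0 < b := ha.trans hab
  set E := Real.exp (-(x*τ)) with hE
  have hE0 : 0 < E := Real.exp_pos _
  have hE1 : E ≤ 1 := by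
    rw [hE, Real.exp_le_one_iff]
    nlinarith
  have hE2 : E^2 ≤ 1 := by nlinarith
  have hsq : (x+a)^2 + y^2 = b^2 * E^2 := by
    nlinarith [Real.sin_sq_add_cos_sq (y*τ)]
  have hxa : a^2 ≤ (x+a)^2 := by nlinarith
  have hy2 : y^2 ≤ b^2 - a^2 := by nlinarith [sq_nonneg b]
  have hyle : y ≤ Real.sqrt (b^2 - a^2) := by
    have h0 : (0:ℝ) ≤ b^2 - a^2 := by nlinarith
    exact (Real.le_sqrt hy h0).mpr hy2
  have harg1 : (-1 : ℝ) ≤ -(a/b) := by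
    rw [neg_le_neg_iff, div_le_one hb]; exact hab.le
  have harg2 : -(a/b) ≤ 1 := by
    have : 0 < a / b := div_pos ha hb
    linarith
  have hcos0 : Real.cos (Real.arccos (-(a/b))) = -(a/b) := Real.cos_arccos harg1 harg2
  have hyτ : y * τ < Real.arccos (-(a/b)) := by
    calc y * τ ≤ Real.sqrt (b^2-a^2) * τ := by nlinarith
    _ = τ * Real.sqrt (b^2-a^2) := mul_comm _ _
    _ < _ := h
  have hcoslt : Real.cos (Real.arccos (-(a/b))) < Real.cos (y*τ) := by
    apply Real.strictAntiOn_cos _ _ hyτ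
    · exact ⟨mul_nonneg hy hτ.le, hyτ.le.trans (Real.arccos_le_pi _)⟩
    · exact ⟨Real.arccos_nonneg _, Real.arccos_le_pi _⟩
  rw [hcos0] at hcoslt
  have key : b * E * Real.cos (y*τ) > b * E * (-(a/b)) :=
    mul_lt_mul_of_pos_left hcoslt (by positivity)
  have heq : b * E * (-(a/b)) = -(a*E) := by field_simp
  nlinarith

lemma hayes (a b τ : ℝ) (ha : 0 < a) (hab : a < b) (hτ : 0 < τ) :
    (∀ z : ℂ, z + (a : ℂ) + (b : ℂ) * Complex.exp (-z * (τ : ℂ)) = 0 → z.re < 0) ↔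
      τ * Real.sqrt (b^2 - a^2) < Real.arccos (-(a/b)) := by
  constructor
  · intro hstab
    by_contra hcon
    push_neg at hcon
    obtain ⟨z, hz, hre⟩ := exists_root a b τ ha hab hτ hcon
    exact absurd (hstab z hz) (not_lt.mpr hre)
  · intro hineq z hz
    by_contra hre
    push_neg at hre
    rw [root_iff] at hz
    obtain ⟨h1, h2⟩ := hz
    rcases le_or_gt 0 z.im with hy | hy
    · exact no_root a b τ ha hab hτ hineq z.re z.im hre hy h1 h2
    · refine no_root a b τ ha hab hτ hineq z.re (-z.im) hre (by linarith) ?_ ?_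
      · rw [neg_mul, Real.cos_neg]; exact h1
      · rw [neg_mul, Real.sin_neg]
        linarith [h2]

/-- Case III local stability criterion: with w* the (unique) positive equilibrium,
p* = (w*/(Cτ))^B, B > (2−k)(1−(1+2^B)p*), M = (2−k)(1−(1+2^B)p*)·α·(w*)^(k−1)/τ and
N = B·α·(w*)^(k−1)/τ, every root of λ + κM + κN·e^{−λτ} = 0 has negative real part iff
κ·α·(w*)^(k−1)·√(B² − (k−2)²(1−(1+2^B)p*)²) < arccos((k−2)(1−(1+2^B)p*)/B). -/
theorem stmt13 (α β k C τ κ : ℝ) (B : ℤ) (w p M N : ℝ)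
    (hα : 0 < α) (hβ : 0 < β) (hk0 : 0 < k) (hk1 : k < 1)
    (hC : 0 < C) (hτ : 0 < τ) (hκ : 0 < κ) (hB : 1 ≤ B)
    (hw : 0 < w)
    (hweq : α * w ^ (k - 1) * (1 - (1 + (2 : ℝ) ^ B) * (w / (C * τ)) ^ B) =
      β * w * ((1 + (2 : ℝ) ^ B) * (w / (C * τ)) ^ B))
    (hp : p = (w / (C * τ)) ^ B)
    (hBp : (2 - k) * (1 - (1 + (2 : ℝ) ^ B) * p) < (B : ℝ))
    (hM : M = (2 - k) * (1 - (1 + (2 : ℝ) ^ B) * p) * α * w ^ (k - 1) / τ)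
    (hN : N = (B : ℝ) * α * w ^ (k - 1) / τ) :
    (∀ z : ℂ, z + (κ : ℂ) * (M : ℂ) + (κ : ℂ) * (N : ℂ) * Complex.exp (-z * (τ : ℂ)) = 0 →
      z.re < 0) ↔
    κ * α * w ^ (k - 1) *
        Real.sqrt ((B : ℝ) ^ 2 - (k - 2) ^ 2 * (1 - (1 + (2 : ℝ) ^ B) * p) ^ 2) <
      Real.arccos ((k - 2) * (1 - (1 + (2 : ℝ) ^ B) * p) / (B : ℝ)) := by
  have hA : 0 < w ^ (k - 1) := Real.rpow_pos_of_pos hw _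
  have hBR : (0:ℝ) < (B : ℝ) := by exact_mod_cast (by linarith : (0:ℤ) < B)
  have h2k : (0:ℝ) < 2 - k := by linarith
  -- q > 0
  have hLHSpos : 0 < α * w ^ (k - 1) * (1 - (1 + (2 : ℝ) ^ B) * (w / (C * τ)) ^ B) := by
    rw [hweq]
    have hP : 0 < (w / (C * τ)) ^ B := zpow_pos (by positivity) B
    have h2B : (0:ℝ) < 1 + (2 : ℝ) ^ B := by positivity
    positivity
  have hq : 0 < 1 - (1 + (2 : ℝ) ^ B) * p := by
    rw [hp]
    by_contra hcon
    push_neg at hcon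
    have h0 := mul_nonpos_of_nonneg_of_nonpos (mul_pos hα hA).le hcon
    linarith
  -- positivity of M, N and M < N
  have hMpos : 0 < M := by
    rw [hM]
    exact div_pos (mul_pos (mul_pos (mul_pos h2k hq) hα) hA) hτ
  have hNpos : 0 < N := by
    rw [hN]
    exact div_pos (mul_pos (mul_pos hBR hα) hA) hτ
  have hMN : M < N := by
    rw [hM, hN]
    have hnum : (2 - k) * (1 - (1 + (2 : ℝ) ^ B) * p) * α * w ^ (k - 1)
        < (B : ℝ) * α * w ^ (k - 1) := by
      nlinarith [mul_pos (sub_pos.mpr hBp) (mul_pos hα hA)]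
    exact (div_lt_div_iff_of_pos_right hτ).mpr hnum
  have ha : 0 < κ * M := mul_pos hκ hMpos
  have hab : κ * M < κ * N := mul_lt_mul_of_pos_left hMN hκ
  have key := hayes (κ * M) (κ * N) τ ha hab hτ
  have hAτ : (0:ℝ) ≤ κ * α * w ^ (k - 1) / τ :=
    div_nonneg (mul_nonneg (mul_nonneg hκ.le hα.le) hA.le) hτ.le
  have e0 : (κ * N)^2 - (κ * M)^2
      = (κ * α * w ^ (k - 1) / τ)^2 *
        ((B : ℝ)^2 - (k - 2)^2 * (1 - (1 + (2 : ℝ) ^ B) * p)^2) := by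
    rw [hM, hN]
    field_simp
    ring
  have e1 : κ * α * w ^ (k - 1) *
      Real.sqrt ((B : ℝ)^2 - (k - 2)^2 * (1 - (1 + (2 : ℝ) ^ B) * p)^2)
      = τ * Real.sqrt ((κ * N)^2 - (κ * M)^2) := by
    rw [e0, Real.sqrt_mul (by positivity) _, Real.sqrt_sq hAτ]
    field_simp
  have e2 : (k - 2) * (1 - (1 + (2 : ℝ) ^ B) * p) / (B : ℝ) = -((κ * M) / (κ * N)) := by
    rw [hM, hN]
    field_simp
    ring
  rw [show ((κ : ℂ) * (M : ℂ)) = ((κ * M : ℝ) : ℂ) by push_cast; ring,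
    show ((κ : ℂ) * (N : ℂ)) = ((κ * N : ℝ) : ℂ) by push_cast; ring, e1, e2]
  exact key
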